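/- With the same partition and sets, the Hausdorff distance between the set of aggregates S = {∫ x_θ dθ : x feasible for (X_θ)_θ} and S' = {Σ_i μ_i x_i : x_i ∈ X_i} is at most max_i d_i. -/

import Mathlib

open Metric MeasureTheory
open scoped ENNReal
open Set Filter Topology



private lemma geom_sum_aux (ε : ℝ) (hε : 0 ≤ ε) : ∀ n : ℕ, ∑ i ∈ Finset.range n, ε / 2 ^ (i+1) ≤ ε := by
  have key : ∀ n : ℕ, ∑ i ∈ Finset.range n, ε / 2 ^ (i+1) = ε * (1 - (1/2 : ℝ) ^ n) := by
    intro n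
    induction n with
    | zero => simp
    | succ n ih =>
      rw [Finset.sum_range_succ, ih, pow_succ, pow_succ]
      simp only [one_div, inv_pow]
      ring
  intro n
  rw [key n]
  nlinarith [pow_pos (by norm_num : (0:ℝ) < 1/2) n, pow_le_one₀ (by norm_num : (0:ℝ) ≤ 1/2) (by norm_num : (1/2:ℝ) ≤ 1) (n := n)]

/-- **Capacitability**: the continuous image of `ℕ → ℕ` of finite outer measure contains
compact subsets of almost full outer measure. -/
lemma cap_aux {α : Type*} [MeasurableSpace α] [TopologicalSpace α] [OpensMeasurableSpace α]
    (μ : Measure α) [μ.OuterRegular]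
    (f : (ℕ → ℕ) → α) (hf : Continuous f) (hfin : μ (Set.range f) ≠ ⊤)
    {ε : ℝ} (hε : 0 < ε) :
    ∃ K : Set α, IsCompact K ∧ K ⊆ Set.range f ∧ μ (Set.range f) ≤ μ K + ENNReal.ofReal ε := by
  have himg_ne_top : ∀ C : Set (ℕ → ℕ), μ (f '' C) ≠ ⊤ :=
    fun C => ne_top_of_le_ne_top hfin (measure_mono (image_subset_range f C))
  -- sup formula
  have hsup : ∀ (C : Set (ℕ → ℕ)) (n : ℕ),
      μ (f '' C) = ⨆ N, μ (f '' (C ∩ {x | x n ≤ N})) := by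
    intro C n
    have hU : (⋃ N : ℕ, (C ∩ {x | x n ≤ N})) = C := by
      ext y; simp only [Set.mem_iUnion, Set.mem_inter_iff, Set.mem_setOf_eq]
      exact ⟨fun ⟨N, h, _⟩ => h, fun h => ⟨y n, h, le_refl _⟩⟩
    conv_lhs => rw [← hU, Set.image_iUnion]
    refine Directed.measure_iUnion ?_
    intro N M
    refine ⟨max N M, Set.image_mono (Set.inter_subset_inter_right _ ?_),
      Set.image_mono (Set.inter_subset_inter_right _ ?_)⟩
    · intro x hx
      exact le_trans hx (le_max_left N M)
    · intro x hx
      exact le_trans hx (le_max_right N M)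
  -- step choice
  have hstep : ∀ (C : Set (ℕ → ℕ)) (n : ℕ), ∃ N : ℕ,
      μ (f '' C) ≤ μ (f '' (C ∩ {x | x n ≤ N})) + ENNReal.ofReal (ε / 2 ^ (n+1)) := by
    intro C n
    rcases eq_or_ne (μ (f '' C)) 0 with h0 | h0
    · exact ⟨0, by simp [h0]⟩
    have hepos : (0:ℝ≥0∞) < ENNReal.ofReal (ε / 2 ^ (n+1)) := ENNReal.ofReal_pos.2 (by positivity)
    have hlt : μ (f '' C) - ENNReal.ofReal (ε / 2 ^ (n+1)) < ⨆ N, μ (f '' (C ∩ {x | x n ≤ N})) := by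
      rw [← hsup C n]
      exact ENNReal.sub_lt_self (himg_ne_top C) h0 hepos.ne'
    rcases lt_iSup_iff.mp hlt with ⟨N, hN⟩
    exact ⟨N, tsub_le_iff_right.mp hN.le⟩
  classical
  let chooseN : ℕ → Set (ℕ → ℕ) → ℕ := fun n C => (hstep C n).choose
  have chooseN_spec : ∀ (n : ℕ) (C : Set (ℕ → ℕ)),
      μ (f '' C) ≤ μ (f '' (C ∩ {x | x n ≤ chooseN n C})) + ENNReal.ofReal (ε / 2 ^ (n+1)) :=
    fun n C => (hstep C n).choose_spec
  let A : ℕ → Set (ℕ → ℕ) := fun n => Nat.rec (motive := fun _ => Set (ℕ → ℕ)) Set.univ (fun m c => c ∩ {x | x m ≤ chooseN m c}) n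
  have hA0 : A 0 = Set.univ := rfl
  have hAsucc : ∀ n, A (n+1) = A n ∩ {x | x n ≤ chooseN n (A n)} := fun n => rfl
  set σ : ℕ → ℕ := fun n => chooseN n (A n) with hσ
  -- invariant
  have hinv : ∀ n, μ (Set.range f) ≤ μ (f '' A n)
      + ENNReal.ofReal (∑ i ∈ Finset.range n, ε / 2 ^ (i+1)) := by
    intro n
    induction n with
    | zero =>
        rw [hA0, Set.image_univ]
        simp
    | succ n ih =>
      have h1 := chooseN_spec n (A n)
      calc μ (Set.range f) ≤ μ (f '' A n) + ENNReal.ofReal (∑ i ∈ Finset.range n, ε / 2 ^ (i+1)) := ih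
        _ ≤ (μ (f '' A (n+1)) + ENNReal.ofReal (ε / 2 ^ (n+1)))
            + ENNReal.ofReal (∑ i ∈ Finset.range n, ε / 2 ^ (i+1)) := by
            rw [hAsucc]; exact add_le_add_left h1 _
        _ = μ (f '' A (n+1)) + ENNReal.ofReal (∑ i ∈ Finset.range (n+1), ε / 2 ^ (i+1)) := by
            rw [Finset.sum_range_succ,
              ENNReal.ofReal_add (Finset.sum_nonneg (fun i _ => div_nonneg hε.le (by positivity)))
                (div_nonneg hε.le (by positivity))]
            rw [add_assoc, add_comm (ENNReal.ofReal (ε / 2 ^ (n+1)))]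
  have hAeq : ∀ n, A n = {x : ℕ → ℕ | ∀ i < n, x i ≤ σ i} := by
    intro n
    induction n with
    | zero =>
        rw [hA0]
        ext x
        simp
    | succ n ih =>
      rw [hAsucc]
      show A n ∩ {x | x n ≤ σ n} = _
      rw [ih]
      ext x
      simp only [Set.mem_inter_iff, Set.mem_setOf_eq, Nat.lt_succ_iff_lt_or_eq]
      constructor
      · rintro ⟨h1, h2⟩ i (hi | rfl)
        · exact h1 i hi
        · exact h2
      · intro h
        exact ⟨fun i hi => h i (Or.inl hi), h n (Or.inr rfl)⟩
  set Kset : Set (ℕ → ℕ) := Set.pi Set.univ (fun i => Set.Iic (σ i)) with hKset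
  have hKsetcomp : IsCompact Kset := isCompact_univ_pi (fun i => (Set.finite_Iic _).isCompact)
  refine ⟨f '' Kset, hKsetcomp.image hf, Set.image_subset_range f _, ?_⟩
  have hKA : ∀ n, Kset ⊆ A n := by
    intro n
    rw [hAeq]
    intro x hx i _
    exact hx i (Set.mem_univ i)
  -- open approximation
  have hopen : ∀ U : Set α, IsOpen U → f '' Kset ⊆ U → ∃ n, f '' A n ⊆ U := by
    intro U hU hKU
    by_contra hcon
    push_neg at hcon
    have hex : ∀ n, ∃ x, x ∈ A n ∧ f x ∉ U := by
      intro n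
      rcases Set.not_subset.mp (hcon n) with ⟨a, ha, haU⟩
      rcases ha with ⟨x, hx, rfl⟩
      exact ⟨x, hx, haU⟩
    choose xs hxsA hxsU using hex
    set M : ℕ → ℕ := fun i => max (σ i) (Finset.sup (Finset.range (i+1)) (fun n => xs n i)) with hM
    have hxsM : ∀ n i, xs n i ≤ M i := by
      intro n i
      rcases le_or_gt n i with h | h
      · exact le_trans (Finset.le_sup (f := fun n => xs n i)
          (Finset.mem_range.mpr (Nat.lt_succ_of_le h))) (le_max_right _ _)
      · have := hxsA n
        rw [hAeq] at this
        exact le_trans (this i h) (le_max_left _ _)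
    have hPcomp : IsCompact (Set.pi Set.univ (fun i => Set.Iic (M i))) :=
      isCompact_univ_pi (fun i => (Set.finite_Iic _).isCompact)
    have hxsP : ∀ n, xs n ∈ Set.pi Set.univ (fun i => Set.Iic (M i)) :=
      fun n i _ => hxsM n i
    rcases hPcomp.tendsto_subseq hxsP with ⟨x, _, φ, hφ, hxtend⟩
    have hxK : x ∈ Kset := by
      intro i _
      have hcoord : Tendsto (fun j => xs (φ j) i) atTop (nhds (x i)) :=
        (tendsto_pi_nhds.mp hxtend) i
      refine (isClosed_discrete (Set.Iic (σ i))).mem_of_tendsto hcoord ?_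
      filter_upwards [Filter.eventually_gt_atTop i] with j hj
      have hji : i < φ j := lt_of_lt_of_le hj (hφ.le_apply)
      have := hxsA (φ j)
      rw [hAeq] at this
      exact this i hji
    have hfU : f x ∈ U := hKU ⟨x, hxK, rfl⟩
    have hftend : Tendsto (fun j => f (xs (φ j))) atTop (nhds (f x)) :=
      (hf.tendsto x).comp hxtend
    have : f x ∈ Uᶜ :=
      (hU.isClosed_compl).mem_of_tendsto hftend (Filter.Eventually.of_forall (fun j => hxsU (φ j)))
    exact this hfU
  -- conclusion via outer regularity
  by_contra hcon
  push_neg at hcon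
  have hKlt : μ (f '' Kset) < μ (Set.range f) - ENNReal.ofReal ε := lt_tsub_iff_right.mpr hcon
  rcases Set.exists_isOpen_lt_of_lt (f '' Kset) _ hKlt with ⟨U, hKU, hUopen, hUlt⟩
  rcases hopen U hUopen hKU with ⟨n, hn⟩
  have : μ (Set.range f) ≤ μ U + ENNReal.ofReal ε := by
    calc μ (Set.range f) ≤ μ (f '' A n) + ENNReal.ofReal (∑ i ∈ Finset.range n, ε / 2 ^ (i+1)) := hinv n
      _ ≤ μ U + ENNReal.ofReal ε :=
        add_le_add (measure_mono hn) (ENNReal.ofReal_le_ofReal (geom_sum_aux ε hε.le n))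
  have hle : ENNReal.ofReal ε ≤ μ (Set.range f) := le_of_lt (lt_of_le_of_lt le_add_self hcon)
  have h2 : μ (Set.range f) < μ (Set.range f) := lt_of_le_of_lt this (by
    calc μ U + ENNReal.ofReal ε < (μ (Set.range f) - ENNReal.ofReal ε) + ENNReal.ofReal ε :=
      ENNReal.add_lt_add_right ENNReal.ofReal_ne_top hUlt
      _ ≤ μ (Set.range f) := le_of_eq (tsub_add_cancel_of_le hle))
  exact lt_irrefl _ h2

section
variable {α : Type*} [MeasurableSpace α] [TopologicalSpace α] [T2Space α] [BorelSpace α]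

/-- Analytic sets of finite outer measure are null measurable (for outer regular measures). -/
lemma analyticSet_nullMeasurableSet (μ : Measure α) [μ.OuterRegular]
    {A : Set α} (hA : MeasureTheory.AnalyticSet A) (hfin : μ A ≠ ⊤) :
    NullMeasurableSet A μ := by
  rw [MeasureTheory.AnalyticSet_def] at hA
  rcases hA with rfl | ⟨f, hf, rfl⟩
  · exact MeasurableSet.empty.nullMeasurableSet
  -- compact approximations
  have hK : ∀ m : ℕ, ∃ K : Set α, IsCompact K ∧ K ⊆ Set.range f ∧
      μ (Set.range f) ≤ μ K + ENNReal.ofReal (1 / (m+1)) := by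
    intro m
    exact cap_aux μ f hf hfin (by positivity)
  choose K hKcomp hKsub hKle using hK
  set B : Set α := ⋃ m, K m with hB
  have hBmeas : MeasurableSet B := MeasurableSet.iUnion (fun m => (hKcomp m).measurableSet)
  have hBsub : B ⊆ Set.range f := Set.iUnion_subset hKsub
  have hμB : μ (Set.range f) ≤ μ B := by
    refine ENNReal.le_of_forall_pos_le_add (fun η hη hB' => ?_)
    rcases exists_nat_one_div_lt (by exact_mod_cast hη : (0:ℝ) < (η:ℝ)) with ⟨m, hm⟩
    calc μ (Set.range f) ≤ μ (K m) + ENNReal.ofReal (1 / (m+1)) := hKle m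
      _ ≤ μ B + η := by
        refine add_le_add (measure_mono (Set.subset_iUnion K m)) ?_
        rw [← ENNReal.ofReal_coe_nnreal]
        exact ENNReal.ofReal_le_ofReal hm.le
  set H := toMeasurable μ (Set.range f) with hH
  have hnull : μ (H \ B) = 0 := by
    have hBH : B ⊆ H := hBsub.trans (subset_toMeasurable μ _)
    rw [measure_diff hBH hBmeas.nullMeasurableSet (ne_top_of_le_ne_top hfin (measure_mono hBsub))]
    rw [measure_toMeasurable]
    exact tsub_eq_zero_of_le (hμB.trans (le_refl _))
  have hAeq : Set.range f = B ∪ (Set.range f \ B) := (Set.union_diff_cancel' (le_refl _) hBsub).symm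
  rw [hAeq]
  exact hBmeas.nullMeasurableSet.union
    (NullMeasurableSet.of_null (measure_mono_null
      (Set.diff_subset_diff_left (subset_toMeasurable μ _)) hnull))

end

/-- Helper: "least index whose set contains θ, with measurable fallback" is measurable. -/
lemma measurable_findIndex {P : ℕ → Set ℝ} (hP : ∀ k, MeasurableSet (P k))
    {g : ℝ → ℕ} (hg : Measurable g) [∀ θ, DecidablePred (fun k => θ ∈ P k)]
    [∀ θ, Decidable (∃ k, θ ∈ P k)] :
    Measurable (fun θ => if h : ∃ k, θ ∈ P k then Nat.find h else g θ) := by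
  apply measurable_to_countable'
  intro m
  have : (fun θ => if h : ∃ k, θ ∈ P k then Nat.find h else g θ) ⁻¹' {m} =
      (P m ∩ ⋂ j ∈ Finset.range m, (P j)ᶜ) ∪ ((⋃ k, P k)ᶜ ∩ g ⁻¹' {m}) := by
    ext θ
    by_cases h : ∃ k, θ ∈ P k
    · simp only [Set.mem_preimage, Set.mem_singleton_iff, dif_pos h, Set.mem_union,
        Set.mem_inter_iff, Set.mem_iInter, Set.mem_compl_iff, Set.mem_iUnion, Finset.mem_range]
      constructor
      · intro hm
        left
        rw [Nat.find_eq_iff h] at hm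
        exact ⟨hm.1, fun j hj => hm.2 j hj⟩
      · rintro (⟨h1, h2⟩ | ⟨h1, _⟩)
        · rw [Nat.find_eq_iff h]
          exact ⟨h1, fun j hj => h2 j hj⟩
        · exact absurd h (by simpa using h1)
    · simp only [Set.mem_preimage, Set.mem_singleton_iff, dif_neg h, Set.mem_union,
        Set.mem_inter_iff, Set.mem_iInter, Set.mem_compl_iff, Set.mem_iUnion, Finset.mem_range]
      constructor
      · intro hm
        right
        exact ⟨h, hm⟩
      · rintro (⟨h1, _⟩ | ⟨_, h2⟩)
        · exact absurd ⟨m, h1⟩ h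
        · exact h2
  rw [this]
  refine MeasurableSet.union (MeasurableSet.inter (hP m) ?_)
    (MeasurableSet.inter (MeasurableSet.iUnion (fun k => hP k)).compl (hg (measurableSet_singleton m)))
  exact MeasurableSet.biInter (Finset.range m).countable_toSet (fun j _ => (hP j).compl)

/-- Measurable a.e.-selection of a Borel graph over `[0,1]` with closed nonempty sections. -/
lemma exists_ae_selection {E : Type*} [MeasurableSpace E] [MetricSpace E] [CompleteSpace E]
    [SecondCountableTopology E] [BorelSpace E] [PolishSpace E]
    (G : Set (ℝ × E)) (hG : MeasurableSet G)
    (hsub : ∀ p ∈ G, p.1 ∈ Set.Icc (0:ℝ) 1)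
    (hne : ∀ θ ∈ Set.Icc (0:ℝ) 1, ∃ y, (θ, y) ∈ G)
    (hcl : ∀ θ, IsClosed {y | (θ, y) ∈ G}) :
    ∃ (g : ℝ → E) (Z : Set ℝ), Measurable g ∧ MeasurableSet Z ∧ volume Z = 0 ∧
      ∀ θ ∈ Set.Icc (0:ℝ) 1 \ Z, (θ, g θ) ∈ G := by
  classical
  have hEne : Nonempty E := ⟨(hne 0 (by norm_num)).choose⟩
  set q : ℕ → E := TopologicalSpace.denseSeq E with hqdef
  have hq : DenseRange q := TopologicalSpace.denseRange_denseSeq E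
  set r : ℕ → ℝ := fun n => (1/2 : ℝ)^n with hrdef
  have hrpos : ∀ n, 0 < r n := fun n => pow_pos (by norm_num) n
  set S : ℕ → ℕ → Set ℝ := fun n k => Prod.fst '' (G ∩ (Set.univ ×ˢ Metric.ball (q k) (r n)))
    with hSdef
  have hSmem : ∀ {n k θ}, θ ∈ S n k ↔ ∃ y, (θ, y) ∈ G ∧ dist y (q k) < r n := by
    intro n k θ
    constructor
    · rintro ⟨⟨θ', y⟩, ⟨hyG, -, hyb⟩, rfl⟩
      exact ⟨y, hyG, mem_ball.mp hyb⟩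
    · rintro ⟨y, hyG, hyb⟩
      exact ⟨(θ, y), ⟨hyG, Set.mem_univ _, mem_ball.mpr hyb⟩, rfl⟩
  have hSnull : ∀ n k, NullMeasurableSet (S n k) volume := by
    intro n k
    have han : MeasureTheory.AnalyticSet (S n k) :=
      ((hG.inter (MeasurableSet.univ.prod measurableSet_ball)).analyticSet).image_of_continuous
        continuous_fst
    refine analyticSet_nullMeasurableSet volume han ?_
    have hsub' : S n k ⊆ Set.Icc (0:ℝ) 1 := by
      rintro θ ⟨p, ⟨hpG, -⟩, rfl⟩
      exact hsub p hpG
    refine ne_top_of_le_ne_top ?_ (measure_mono hsub')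
    simp [Real.volume_Icc]
  set M : ℕ → ℕ → Set ℝ := fun n k => toMeasurable volume (S n k) with hMdef
  have hMmeas : ∀ n k, MeasurableSet (M n k) := fun n k => measurableSet_toMeasurable _ _
  have hSM : ∀ n k, S n k ⊆ M n k := fun n k => subset_toMeasurable _ _
  have hMSnull : ∀ n k, volume (M n k \ S n k) = 0 := by
    intro n k
    have := (hSnull n k).toMeasurable_ae_eq
    exact (MeasureTheory.ae_eq_set.mp this).1
  set Z : Set ℝ := ⋃ (n : ℕ), ⋃ (k : ℕ), toMeasurable volume (M n k \ S n k) with hZdef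
  have hZmeas : MeasurableSet Z :=
    MeasurableSet.iUnion (fun n => MeasurableSet.iUnion (fun k => measurableSet_toMeasurable _ _))
  have hZnull : volume Z = 0 := by
    refine measure_iUnion_null (fun n => measure_iUnion_null (fun k => ?_))
    rw [measure_toMeasurable]
    exact hMSnull n k
  have hZgood : ∀ θ, θ ∉ Z → ∀ n k, θ ∈ M n k → θ ∈ S n k := by
    intro θ hθ n k hM
    by_contra hS
    exact hθ (Set.mem_iUnion.mpr ⟨n, Set.mem_iUnion.mpr ⟨k,
      subset_toMeasurable _ _ ⟨hM, hS⟩⟩⟩)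
  -- the recursive index functions
  set K : ℕ → ℝ → ℕ := fun n => Nat.rec (motive := fun _ => ℝ → ℕ)
    (fun θ => if h : ∃ k, θ ∈ M 0 k then Nat.find h else 0)
    (fun n Kn θ => if h : ∃ k, θ ∈ M (n+1) k ∩ (Kn ⁻¹' {j | dist (q k) (q j) < r (n+1) + r n})
      then Nat.find h else Kn θ) n with hKdef
  have hK0 : K 0 = fun θ => if h : ∃ k, θ ∈ M 0 k then Nat.find h else 0 := rfl
  have hKsucc : ∀ n, K (n+1) = fun θ =>
      if h : ∃ k, θ ∈ M (n+1) k ∩ ((K n) ⁻¹' {j | dist (q k) (q j) < r (n+1) + r n})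
      then Nat.find h else K n θ := fun n => rfl
  have hKmeas : ∀ n, Measurable (K n) := by
    intro n
    induction n with
    | zero =>
      rw [hK0]
      exact measurable_findIndex (fun k => hMmeas 0 k) measurable_const
    | succ n ih =>
      rw [hKsucc n]
      exact measurable_findIndex
        (fun k => (hMmeas (n+1) k).inter (ih (MeasurableSet.of_discrete (s := _))) ) ih
  set x : ℕ → ℝ → E := fun n θ => q (K n θ) with hxdef
  have hxmeas : ∀ n, Measurable (x n) := fun n => (measurable_of_countable q).comp (hKmeas n)
  -- invariant
  have hInv : ∀ θ, θ ∈ Set.Icc (0:ℝ) 1 → θ ∉ Z → ∀ n, θ ∈ S n (K n θ) := by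
    intro θ hθI hθZ n
    induction n with
    | zero =>
      obtain ⟨y, hy⟩ := hne θ hθI
      obtain ⟨k, hk⟩ := hq.exists_dist_lt y (hrpos 0)
      have hθS : θ ∈ S 0 k := hSmem.mpr ⟨y, hy, hk⟩
      have hex : ∃ k, θ ∈ M 0 k := ⟨k, hSM 0 k hθS⟩
      have : K 0 θ = Nat.find hex := by rw [hK0]; exact dif_pos hex
      rw [this]
      exact hZgood θ hθZ 0 _ (Nat.find_spec hex)
    | succ n ih =>
      obtain ⟨y, hyG, hyd⟩ := hSmem.mp ih
      obtain ⟨k, hk⟩ := hq.exists_dist_lt y (hrpos (n+1))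
      have hθS : θ ∈ S (n+1) k := hSmem.mpr ⟨y, hyG, hk⟩
      have hdd : dist (q k) (q (K n θ)) < r (n+1) + r n :=
        calc dist (q k) (q (K n θ)) ≤ dist (q k) y + dist y (q (K n θ)) := dist_triangle _ _ _
          _ < r (n+1) + r n := add_lt_add (by rw [dist_comm]; exact hk) hyd
      have hex : ∃ k, θ ∈ M (n+1) k ∩ ((K n) ⁻¹' {j | dist (q k) (q j) < r (n+1) + r n}) :=
        ⟨k, hSM (n+1) k hθS, hdd⟩
      have hKe : K (n+1) θ = Nat.find hex := by rw [hKsucc n]; exact dif_pos hex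
      rw [hKe]
      exact hZgood θ hθZ (n+1) _ (Nat.find_spec hex).1
  -- Cauchy
  have hdist : ∀ n θ, dist (x (n+1) θ) (x n θ) ≤ r (n+1) + r n := by
    intro n θ
    by_cases hex : ∃ k, θ ∈ M (n+1) k ∩ ((K n) ⁻¹' {j | dist (q k) (q j) < r (n+1) + r n})
    · have hKe : K (n+1) θ = Nat.find hex := by rw [hKsucc n]; exact dif_pos hex
      have := (Nat.find_spec hex).2
      simp only [Set.mem_preimage, Set.mem_setOf_eq] at this
      rw [hxdef]
      simp only []
      rw [hKe]
      exact le_of_lt this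
    · have hKe : K (n+1) θ = K n θ := by rw [hKsucc n]; exact dif_neg hex
      rw [hxdef]
      simp only []
      rw [hKe, dist_self]
      positivity
  have hcauchy : ∀ θ, CauchySeq (fun n => x n θ) := by
    intro θ
    apply cauchySeq_of_le_geometric (1/2 : ℝ) 3 (by norm_num)
    intro n
    rw [dist_comm]
    calc dist (x (n+1) θ) (x n θ) ≤ r (n+1) + r n := hdist n θ
      _ ≤ 3 * (1/2)^n := by
        rw [hrdef]
        simp only [pow_succ]
        nlinarith [pow_pos (by norm_num : (0:ℝ) < 1/2) n]
  have hlim : ∀ θ, ∃ c, Tendsto (fun n => x n θ) atTop (nhds c) :=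
    fun θ => cauchySeq_tendsto_of_complete (hcauchy θ)
  set g : ℝ → E := fun θ => (hlim θ).choose with hgdef
  have hgtend : ∀ θ, Tendsto (fun n => x n θ) atTop (nhds (g θ)) := fun θ => (hlim θ).choose_spec
  have hgmeas : Measurable g :=
    measurable_of_tendsto_metrizable' atTop hxmeas (tendsto_pi_nhds.mpr hgtend)
  refine ⟨g, Z, hgmeas, hZmeas, hZnull, ?_⟩
  rintro θ ⟨hθI, hθZ⟩
  -- approximating points
  have hy : ∀ n, ∃ y, (θ, y) ∈ G ∧ dist y (x n θ) < r n := by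
    intro n
    obtain ⟨y, hyG, hyd⟩ := hSmem.mp (hInv θ hθI hθZ n)
    exact ⟨y, hyG, hyd⟩
  choose y hyG hyd using hy
  have hytend : Tendsto y atTop (nhds (g θ)) := by
    rw [tendsto_iff_dist_tendsto_zero]
    have hb : ∀ n, dist (y n) (g θ) ≤ r n + dist (x n θ) (g θ) := by
      intro n
      calc dist (y n) (g θ) ≤ dist (y n) (x n θ) + dist (x n θ) (g θ) := dist_triangle _ _ _
        _ ≤ r n + dist (x n θ) (g θ) := add_le_add_left (hyd n).le _
    have h0 : Tendsto (fun n => r n + dist (x n θ) (g θ)) atTop (nhds (0 + 0)) := by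
      apply Tendsto.add
      · exact tendsto_pow_atTop_nhds_zero_of_lt_one (by norm_num) (by norm_num)
      · exact tendsto_iff_dist_tendsto_zero.mp (hgtend θ)
    have h0' : Tendsto (fun n => r n + dist (x n θ) (g θ)) atTop (nhds 0) := by
      simpa using h0
    exact squeeze_zero (fun n => dist_nonneg) hb h0'
  exact (hcl θ).mem_of_tendsto hytend (Filter.Eventually.of_forall (fun n => hyG n))

/-- Lebesgue measure restricted to the player set `Θ = [0,1]`. -/
noncomputable def μ01 : Measure ℝ := volume.restrict (Set.Icc 0 1)

lemma μ01_eq : μ01 = volume.restrict (Set.Icc 0 1) := rfl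

instance : IsFiniteMeasure μ01 := by
  constructor
  rw [μ01_eq, Measure.restrict_apply_univ]
  simp [Real.volume_Icc]



/-- Lemma `lem:hausdorff_agg_sets` i: the Hausdorff distance between the set
of aggregates `S = {∫ x_θ dθ : x feasible for (𝒳_θ)}` and the set of finite-type aggregates
`S' = {Σ_i μ_i x_i : x_i ∈ X_i}` is at most `max_i d_i`. -/
theorem hausdorffDist_aggregate_sets_le {T I : ℕ} {R : ℝ}
    (𝒳 : ℝ → Set (EuclideanSpace ℝ (Fin T)))
    (Θp : Fin I → Set ℝ)
    (Xi : Fin I → Set (EuclideanSpace ℝ (Fin T)))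
    (d : Fin I → ℝ) (D : ℝ)
    (hΘmeas : ∀ i, MeasurableSet (Θp i))
    (hΘdisj : ∀ i j, i ≠ j → Disjoint (Θp i) (Θp j))
    (hΘcover : (⋃ i, Θp i) = Set.Icc (0:ℝ) 1)
    (hgraph : MeasurableSet
      {p : ℝ × EuclideanSpace ℝ (Fin T) | p.1 ∈ Set.Icc (0:ℝ) 1 ∧ p.2 ∈ 𝒳 p.1})
    (hXne : ∀ θ ∈ Set.Icc (0:ℝ) 1, (𝒳 θ).Nonempty)
    (hXconv : ∀ θ ∈ Set.Icc (0:ℝ) 1, Convex ℝ (𝒳 θ))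
    (hXcomp : ∀ θ ∈ Set.Icc (0:ℝ) 1, IsCompact (𝒳 θ))
    (hXbd : ∀ θ ∈ Set.Icc (0:ℝ) 1, 𝒳 θ ⊆ Metric.closedBall 0 R)
    (hXine : ∀ i, (Xi i).Nonempty) (hXiconv : ∀ i, Convex ℝ (Xi i))
    (hXicomp : ∀ i, IsCompact (Xi i))
    (hH : ∀ i, ∀ θ ∈ Θp i, Metric.hausdorffDist (𝒳 θ) (Xi i) ≤ d i)
    (hD : ∀ i, d i ≤ D) :
    Metric.hausdorffDist
      {z : EuclideanSpace ℝ (Fin T) | ∃ x : ℝ → EuclideanSpace ℝ (Fin T),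
        Measurable x ∧ (∀ θ ∈ Set.Icc (0:ℝ) 1, x θ ∈ 𝒳 θ) ∧ (∫ θ, x θ ∂μ01) = z}
      {z : EuclideanSpace ℝ (Fin T) | ∃ w : Fin I → EuclideanSpace ℝ (Fin T),
        (∀ i, w i ∈ Xi i) ∧ (∑ i, (volume (Θp i)).toReal • w i) = z} ≤ D := by
  classical
  set S : Set (EuclideanSpace ℝ (Fin T)) := {z : EuclideanSpace ℝ (Fin T) | ∃ x : ℝ → EuclideanSpace ℝ (Fin T),
      Measurable x ∧ (∀ θ ∈ Set.Icc (0:ℝ) 1, x θ ∈ 𝒳 θ) ∧ (∫ θ, x θ ∂μ01) = z} with hSdef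
  set S' : Set (EuclideanSpace ℝ (Fin T)) := {z : EuclideanSpace ℝ (Fin T) | ∃ w : Fin I → EuclideanSpace ℝ (Fin T),
      (∀ i, w i ∈ Xi i) ∧ (∑ i, (volume (Θp i)).toReal • w i) = z} with hS'def
  -- basic facts
  have hΘsub : ∀ i, Θp i ⊆ Set.Icc (0:ℝ) 1 := by
    intro i
    rw [← hΘcover]
    exact Set.subset_iUnion Θp i
  have hIccvol : volume (Set.Icc (0:ℝ) 1) = 1 := by simp [Real.volume_Icc]
  have hΘfin : ∀ i, volume (Θp i) ≠ ⊤ := by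
    intro i
    refine ne_top_of_le_ne_top ?_ (measure_mono (hΘsub i))
    simp [hIccvol]
  set μi : Fin I → ℝ := fun i => (volume (Θp i)).toReal with hμidef
  have hμinneg : ∀ i, 0 ≤ μi i := fun i => ENNReal.toReal_nonneg
  have hμisum : ∑ i, μi i = 1 := by
    have h1 : (1:ℝ≥0∞) = ∑ i, volume (Θp i) := by
      rw [← hIccvol, ← hΘcover, measure_iUnion (fun i j hij => hΘdisj i j hij) hΘmeas,
        tsum_fintype]
    rw [hμidef]
    simp only []
    rw [← ENNReal.toReal_sum (fun i _ => hΘfin i), ← h1]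
    simp
  have hD0 : 0 ≤ D := by
    have h0 : (0:ℝ) ∈ Set.Icc (0:ℝ) 1 := ⟨le_refl _, zero_le_one⟩
    rw [← hΘcover] at h0
    rcases Set.mem_iUnion.mp h0 with ⟨i, hi⟩
    exact le_trans (le_trans hausdorffDist_nonneg (hH i 0 hi)) (hD i)
  have hedist : ∀ i, ∀ θ ∈ Θp i, EMetric.hausdorffEdist (𝒳 θ) (Xi i) ≠ ⊤ := by
    intro i θ hθ
    exact hausdorffEdist_ne_top_of_nonempty_of_bounded (hXne θ (hΘsub i hθ)) (hXine i)
      (hXcomp θ (hΘsub i hθ)).isBounded (hXicomp i).isBounded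
  have hd0 : ∀ i, (Θp i).Nonempty → 0 ≤ d i := by
    rintro i ⟨θ, hθ⟩
    exact le_trans hausdorffDist_nonneg (hH i θ hθ)
  -- integrability of feasible selections
  have hint : ∀ x : ℝ → EuclideanSpace ℝ (Fin T), Measurable x → (∀ θ ∈ Set.Icc (0:ℝ) 1, x θ ∈ 𝒳 θ) →
      Integrable x μ01 := by
    intro x hxm hxf
    refine ⟨hxm.aestronglyMeasurable, HasFiniteIntegral.of_bounded (C := max R 0) ?_⟩
    rw [μ01_eq, ae_restrict_iff' measurableSet_Icc]
    refine Filter.Eventually.of_forall (fun θ hθ => ?_)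
    have := hXbd θ hθ (hxf θ hθ)
    rw [Metric.mem_closedBall, dist_zero_right] at this
    exact le_trans this (le_max_left _ _)
  have hres : ∀ i, μ01.restrict (Θp i) = volume.restrict (Θp i) := by
    intro i
    rw [μ01_eq, Measure.restrict_restrict (hΘmeas i), Set.inter_eq_left.mpr (hΘsub i)]
  have hsplit : ∀ x : ℝ → EuclideanSpace ℝ (Fin T), Integrable x μ01 →
      (∫ θ, x θ ∂μ01) = ∑ i, ∫ θ in Θp i, x θ ∂volume := by
    intro x hx
    have : (∫ θ, x θ ∂μ01) = ∫ θ in ⋃ i, Θp i, x θ ∂volume := by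
      rw [μ01_eq, hΘcover]
    rw [this, integral_iUnion hΘmeas (fun i j hij => hΘdisj i j hij)
      (by rw [hΘcover]; exact hx), tsum_fintype]
  -- case split on S empty
  rcases Set.eq_empty_or_nonempty S with hS | ⟨z₀, x₀, hx₀m, hx₀f, hx₀i⟩
  · rw [hS]
    rw [hausdorffDist_comm, hausdorffDist_empty]
    exact hD0
  refine hausdorffDist_le_of_infDist hD0 ?_ ?_
  · -- direction 1 : S within D of S'
    rintro z ⟨x, hxm, hxf, hxi⟩
    have hxint : Integrable x μ01 := hint x hxm hxf
    have key1 : ∀ i, ∃ w ∈ Xi i,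
        ‖(∫ θ in Θp i, x θ ∂volume) - μi i • w‖ ≤ μi i * d i := by
      intro i
      rcases eq_or_ne (volume (Θp i)) 0 with hz0 | hz0
      · refine ⟨(hXine i).some, (hXine i).some_mem, ?_⟩
        have h1 : volume.restrict (Θp i) = 0 := Measure.restrict_eq_zero.mpr hz0
        have h2 : μi i = 0 := by rw [hμidef]; simp [hz0]
        rw [h1, h2]
        simp
      · have hΘne : (Θp i).Nonempty := by
          rw [Set.nonempty_iff_ne_empty]
          intro h
          exact hz0 (by simp [h])
        have hdi0 : 0 ≤ d i := hd0 i hΘne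
        -- the average of x over Θp i lies in the d i-thickening of Xi i
        set C : Set (EuclideanSpace ℝ (Fin T)) := Metric.cthickening (d i) (Xi i) with hCdef
        have hCconv : Convex ℝ C := (hXiconv i).cthickening _
        have hCclosed : IsClosed C := Metric.isClosed_cthickening
        have hmemC : ∀ θ ∈ Θp i, x θ ∈ C := by
          intro θ hθ
          have h1 : infDist (x θ) (Xi i) ≤ hausdorffDist (𝒳 θ) (Xi i) :=
            infDist_le_hausdorffDist_of_mem (hxf θ (hΘsub i hθ)) (hedist i θ hθ)
          have h2 : infDist (x θ) (Xi i) ≤ d i := le_trans h1 (hH i θ hθ)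
          rw [hCdef, Metric.mem_cthickening_iff]
          rw [Metric.infDist] at h2
          have h3 : infEDist (x θ) (Xi i) ≠ ⊤ :=
            infEDist_ne_top (hXine i)
          rw [← ENNReal.ofReal_toReal h3]
          exact ENNReal.ofReal_le_ofReal h2
        haveI : IsFiniteMeasure (volume.restrict (Θp i)) := by
          constructor
          rw [Measure.restrict_apply_univ]
          exact lt_top_iff_ne_top.mpr (hΘfin i)
        haveI : NeZero (volume.restrict (Θp i)) := by
          constructor
          intro h
          exact hz0 (Measure.restrict_eq_zero.mp h)
        have hintres : Integrable x (volume.restrict (Θp i)) := by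
          rw [← hres i]
          exact hxint.restrict
        have haC : (⨍ θ in Θp i, x θ ∂volume) ∈ C := by
          refine hCconv.average_mem hCclosed ?_ hintres
          rw [ae_restrict_iff' (hΘmeas i)]
          exact Filter.Eventually.of_forall hmemC
        obtain ⟨w, hwXi, hwd⟩ :=
          (hXicomp i).exists_infDist_eq_dist (hXine i) (⨍ θ in Θp i, x θ ∂volume)
        have hwle : dist (⨍ θ in Θp i, x θ ∂volume) w ≤ d i := by
          rw [← hwd]
          rw [hCdef, Metric.mem_cthickening_iff] at haC
          rw [Metric.infDist]
          exact ENNReal.toReal_le_of_le_ofReal hdi0 haC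
        refine ⟨w, hwXi, ?_⟩
        have hμine : μi i ≠ 0 := by
          rw [hμidef]
          simp only []
          exact ENNReal.toReal_ne_zero.mpr ⟨hz0, hΘfin i⟩
        have havg : (∫ θ in Θp i, x θ ∂volume) = μi i • (⨍ θ in Θp i, x θ ∂volume) := by
          rw [average_eq, smul_smul, measureReal_def, Measure.restrict_apply_univ]
          rw [mul_inv_cancel₀ hμine, one_smul]
        rw [havg, ← smul_sub, norm_smul, Real.norm_eq_abs, abs_of_nonneg (hμinneg i)]
        refine mul_le_mul_of_nonneg_left ?_ (hμinneg i)
        rw [← dist_eq_norm]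
        exact hwle
    choose w hwXi hwb using key1
    have hyS' : (∑ i, μi i • w i) ∈ S' := ⟨w, hwXi, rfl⟩
    refine le_trans (infDist_le_dist_of_mem hyS') ?_
    rw [dist_eq_norm, ← hxi, hsplit x hxint, ← Finset.sum_sub_distrib]
    calc ‖∑ i, ((∫ θ in Θp i, x θ ∂volume) - μi i • w i)‖
        ≤ ∑ i, ‖(∫ θ in Θp i, x θ ∂volume) - μi i • w i‖ := norm_sum_le _ _
      _ ≤ ∑ i, μi i * d i := Finset.sum_le_sum (fun i _ => hwb i)
      _ ≤ ∑ i, μi i * D := Finset.sum_le_sum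
          (fun i _ => mul_le_mul_of_nonneg_left (hD i) (hμinneg i))
      _ = (∑ i, μi i) * D := by rw [← Finset.sum_mul]
      _ = D := by rw [hμisum, one_mul]
  · -- direction 2 : S' within D of S
    rintro y ⟨w, hwXi, rfl⟩
    -- the constrained graph
    set G : Set (ℝ × EuclideanSpace ℝ (Fin T)) := {p : ℝ × EuclideanSpace ℝ (Fin T) | p.1 ∈ Set.Icc (0:ℝ) 1 ∧ p.2 ∈ 𝒳 p.1 ∧
        ∀ i, p.1 ∈ Θp i → dist p.2 (w i) ≤ d i} with hGdef
    have hGmeas : MeasurableSet G := by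
      have : G = {p : ℝ × EuclideanSpace ℝ (Fin T) | p.1 ∈ Set.Icc (0:ℝ) 1 ∧ p.2 ∈ 𝒳 p.1} ∩
          ⋂ i, ((Prod.fst ⁻¹' Θp i)ᶜ ∪ (fun p : ℝ × EuclideanSpace ℝ (Fin T) => dist p.2 (w i)) ⁻¹' Set.Iic (d i)) := by
        ext p
        simp only [hGdef, Set.mem_setOf_eq, Set.mem_inter_iff, Set.mem_iInter, Set.mem_union,
          Set.mem_compl_iff, Set.mem_preimage, Set.mem_Iic]
        constructor
        · rintro ⟨h1, h2, h3⟩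
          exact ⟨⟨h1, h2⟩, fun i => or_iff_not_imp_left.mpr (fun hi => h3 i (not_not.mp hi))⟩
        · rintro ⟨⟨h1, h2⟩, h3⟩
          refine ⟨h1, h2, fun i hi => ?_⟩
          rcases h3 i with h | h
          · exact absurd hi h
          · exact h
      rw [this]
      refine hgraph.inter (MeasurableSet.iInter (fun i => MeasurableSet.union ?_ ?_))
      · exact (measurable_fst (hΘmeas i)).compl
      · exact ((measurable_snd.dist measurable_const).comp measurable_id) measurableSet_Iic
    have hGsub : ∀ p ∈ G, p.1 ∈ Set.Icc (0:ℝ) 1 := fun p hp => hp.1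
    have hGne : ∀ θ ∈ Set.Icc (0:ℝ) 1, ∃ yy, (θ, yy) ∈ G := by
      intro θ hθ
      have hθ' := hθ
      rw [← hΘcover] at hθ'
      rcases Set.mem_iUnion.mp hθ' with ⟨i₀, hi₀⟩
      have h1 : infDist (w i₀) (𝒳 θ) ≤ d i₀ := by
        have := infDist_le_hausdorffDist_of_mem (hwXi i₀)
          (by rw [EMetric.hausdorffEdist_comm]; exact hedist i₀ θ hi₀)
        rw [hausdorffDist_comm] at this
        exact le_trans this (hH i₀ θ hi₀)
      obtain ⟨yy, hyyX, hyyd⟩ := (hXcomp θ hθ).exists_infDist_eq_dist (hXne θ hθ) (w i₀)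
      refine ⟨yy, hθ, hyyX, fun i hi => ?_⟩
      have hii : i = i₀ := by
        by_contra hne
        exact Set.disjoint_left.mp (hΘdisj i i₀ hne) hi hi₀ 
      rw [hii, dist_comm, ← hyyd]
      exact h1
    have hGcl : ∀ θ, IsClosed {yy : EuclideanSpace ℝ (Fin T) | (θ, yy) ∈ G} := by
      intro θ
      by_cases hθ : θ ∈ Set.Icc (0:ℝ) 1
      · have : {yy : EuclideanSpace ℝ (Fin T) | (θ, yy) ∈ G} = 𝒳 θ ∩ ⋂ i, {yy : EuclideanSpace ℝ (Fin T) | θ ∈ Θp i → dist yy (w i) ≤ d i} := by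
          ext yy
          simp only [hGdef, Set.mem_setOf_eq, Set.mem_inter_iff, Set.mem_iInter, hθ, true_and]
        rw [this]
        refine IsClosed.inter (hXcomp θ hθ).isClosed (isClosed_iInter (fun i => ?_))
        by_cases hi : θ ∈ Θp i
        · have : {yy : EuclideanSpace ℝ (Fin T) | θ ∈ Θp i → dist yy (w i) ≤ d i} = Metric.closedBall (w i) (d i) := by
            ext yy
            simp [hi, Metric.mem_closedBall]
          rw [this]
          exact Metric.isClosed_closedBall
        · have : {yy : EuclideanSpace ℝ (Fin T) | θ ∈ Θp i → dist yy (w i) ≤ d i} = Set.univ := by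
            ext yy
            simp [hi]
          rw [this]
          exact isClosed_univ
      · have : {yy : EuclideanSpace ℝ (Fin T) | (θ, yy) ∈ G} = ∅ := by
          ext yy
          simp only [hGdef, Set.mem_setOf_eq, Set.mem_empty_iff_false, iff_false]
          intro h
          exact hθ h.1
        rw [this]
        exact isClosed_empty
    obtain ⟨g, Z, hgm, hZm, hZ0, hgood⟩ := exists_ae_selection G hGmeas hGsub hGne hGcl
    -- build the feasible selection
    set x : ℝ → EuclideanSpace ℝ (Fin T) := fun θ => if θ ∈ Set.Icc (0:ℝ) 1 \ Z then g θ else x₀ θ with hxdef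
    have hxm : Measurable x := Measurable.ite (measurableSet_Icc.diff hZm) hgm hx₀m
    have hxf : ∀ θ ∈ Set.Icc (0:ℝ) 1, x θ ∈ 𝒳 θ := by
      intro θ hθ
      simp only [hxdef]
      by_cases h : θ ∈ Set.Icc (0:ℝ) 1 \ Z
      · rw [if_pos h]
        exact (hgood θ h).2.1
      · rw [if_neg h]
        exact hx₀f θ hθ
    have hzS : (∫ θ, x θ ∂μ01) ∈ S := ⟨x, hxm, hxf, rfl⟩
    refine le_trans (infDist_le_dist_of_mem hzS) ?_
    -- the step function W
    set W : ℝ → EuclideanSpace ℝ (Fin T) := fun θ => ∑ i, (Θp i).indicator (fun _ => w i) θ with hWdef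
    have hWint : Integrable W μ01 := by
      refine integrable_finset_sum _ (fun i _ => ?_)
      rw [integrable_indicator_iff (hΘmeas i)]
      refine integrableOn_const (lt_top_iff_ne_top.mp ?_)
      rw [μ01_eq, Measure.restrict_apply (hΘmeas i)]
      exact lt_top_iff_ne_top.mpr (ne_top_of_le_ne_top (hΘfin i) (measure_mono Set.inter_subset_left))
    have hWick : ∀ i, μ01 (Θp i) = volume (Θp i) := by
      intro i
      rw [μ01_eq, Measure.restrict_apply (hΘmeas i), Set.inter_eq_left.mpr (hΘsub i)]
    have hWib : (∫ θ, W θ ∂μ01) = ∑ i, μi i • w i := by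
      rw [hWdef]
      simp only []
      rw [integral_finset_sum _ (fun i _ => ?_)]
      · refine Finset.sum_congr rfl (fun i _ => ?_)
        rw [integral_indicator_const (w i) (hΘmeas i), measureReal_def, hWick i]
      · rw [integrable_indicator_iff (hΘmeas i)]
        refine integrableOn_const (lt_top_iff_ne_top.mp ?_)
        rw [μ01_eq, Measure.restrict_apply (hΘmeas i)]
        exact lt_top_iff_ne_top.mpr (ne_top_of_le_ne_top (hΘfin i) (measure_mono Set.inter_subset_left))
    have hxint : Integrable x μ01 := hint x hxm hxf
    -- the pointwise bound function
    set δf : ℝ → ℝ := fun θ => ∑ i, (Θp i).indicator (fun _ => d i) θ with hδdef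
    have hδint : Integrable δf μ01 := by
      refine integrable_finset_sum _ (fun i _ => ?_)
      rw [integrable_indicator_iff (hΘmeas i)]
      refine integrableOn_const (lt_top_iff_ne_top.mp ?_)
      rw [μ01_eq, Measure.restrict_apply (hΘmeas i)]
      exact lt_top_iff_ne_top.mpr (ne_top_of_le_ne_top (hΘfin i) (measure_mono Set.inter_subset_left))
    have hδib : (∫ θ, δf θ ∂μ01) = ∑ i, μi i * d i := by
      rw [hδdef]
      simp only []
      rw [integral_finset_sum _ (fun i _ => ?_)]
      · refine Finset.sum_congr rfl (fun i _ => ?_)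
        rw [integral_indicator_const (d i) (hΘmeas i), measureReal_def, hWick i, smul_eq_mul]
      · rw [integrable_indicator_iff (hΘmeas i)]
        refine integrableOn_const (lt_top_iff_ne_top.mp ?_)
        rw [μ01_eq, Measure.restrict_apply (hΘmeas i)]
        exact lt_top_iff_ne_top.mpr (ne_top_of_le_ne_top (hΘfin i) (measure_mono Set.inter_subset_left))
    -- a.e. pointwise bound
    have hae : ∀ᵐ θ ∂μ01, ‖x θ - W θ‖ ≤ δf θ := by
      rw [μ01_eq, ae_restrict_iff' measurableSet_Icc]
      have hZae : ∀ᵐ θ ∂(volume : Measure ℝ), θ ∉ Z := by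
        rw [ae_iff]
        simp only [not_not]
        simpa using hZ0
      filter_upwards [hZae] with θ hθZ hθI
      have hgd := hgood θ ⟨hθI, hθZ⟩
      have hθ' := hθI
      rw [← hΘcover] at hθ'
      rcases Set.mem_iUnion.mp hθ' with ⟨i₀, hi₀⟩
      have hWeval : W θ = w i₀ := by
        rw [hWdef]
        simp only []
        rw [Finset.sum_eq_single i₀]
        · rw [Set.indicator_of_mem hi₀]
        · intro i _ hne
          rw [Set.indicator_of_notMem]
          intro hi
          exact Set.disjoint_left.mp (hΘdisj i i₀ hne) hi hi₀
        · intro h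
          exact absurd (Finset.mem_univ i₀) h
      have hδeval : δf θ = d i₀ := by
        rw [hδdef]
        simp only []
        rw [Finset.sum_eq_single i₀]
        · rw [Set.indicator_of_mem hi₀]
        · intro i _ hne
          rw [Set.indicator_of_notMem]
          intro hi
          exact Set.disjoint_left.mp (hΘdisj i i₀ hne) hi hi₀
        · intro h
          exact absurd (Finset.mem_univ i₀) h
      have hxeval : x θ = g θ := by
        simp only [hxdef]
        rw [if_pos (Set.mem_diff_of_mem hθI hθZ)]
      rw [hxeval, hWeval, hδeval, ← dist_eq_norm]
      exact hgd.2.2 i₀ hi₀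
    -- put it together
    rw [dist_eq_norm, ← hWib, ← integral_sub hWint hxint]
    calc ‖∫ θ, (W θ - x θ) ∂μ01‖ ≤ ∫ θ, ‖W θ - x θ‖ ∂μ01 := norm_integral_le_integral_norm _
      _ ≤ ∫ θ, δf θ ∂μ01 := by
          refine integral_mono_ae ((hWint.sub hxint).norm) hδint ?_
          filter_upwards [hae] with θ hθ
          rw [norm_sub_rev]
          exact hθ
      _ = ∑ i, μi i * d i := hδib
      _ ≤ ∑ i, μi i * D := Finset.sum_le_sum
          (fun i _ => mul_le_mul_of_nonneg_left (hD i) (hμinneg i))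
      _ = (∑ i, μi i) * D := by rw [← Finset.sum_mul]
      _ = D := by rw [hμisum, one_mul]
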